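/- Let F : ℝ^d → ℝ^d be Lipschitz with constant L and let X(-t;x,v) be the backward characteristic flow of (v,F). Then for all t ≥ 0 and all v, v' ∈ ℝ^d: |X(-t;x,v') - X(-t;x,v)| ≥ |v - v'| (t - L ∫₀^t (t-s) s e^{L s²/2} ds). -/

import Mathlib

open intervalIntegral


open MeasureTheory Real
open scoped ENNReal NNReal

section aux

private lemma ftc1_aux {b : ℝ → ℝ} (hb : Continuous b) (s : ℝ) :
    HasDerivAt (fun u => ∫ r in (0:ℝ)..u, b r) (b s) s :=
  integral_hasDerivAt_right (hb.intervalIntegrable 0 s)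
    (hb.stronglyMeasurableAtFilter _ _) hb.continuousAt


lemma ftc1 {b : ℝ → ℝ} (hb : Continuous b) (s : ℝ) :
    HasDerivAt (fun u => ∫ r in (0:ℝ)..u, b r) (b s) s :=
  integral_hasDerivAt_right (hb.intervalIntegrable 0 s)
    (hb.stronglyMeasurableAtFilter _ _) hb.continuousAt

lemma gronwall_quad (c K t : ℝ) (hc : 0 ≤ c) (hK : 0 ≤ K) (ht : 0 ≤ t)
    (b : ℝ → ℝ) (hb : Continuous b) (hbnn : ∀ s, 0 ≤ b s)
    (hkey : ∀ s ∈ Set.Icc (0:ℝ) t,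
      b s ≤ c + K * ∫ w in (0:ℝ)..s, ∫ r in (0:ℝ)..w, b r) :
    ∀ s ∈ Set.Icc (0:ℝ) t, (∫ r in (0:ℝ)..s, b r) ≤ c * s * Real.exp (K * s^2 / 2) := by
  set g : ℝ → ℝ := fun u => ∫ r in (0:ℝ)..u, b r with hgdef
  have hg' : ∀ s, HasDerivAt g (b s) s := ftc1 hb
  have hgc : Continuous g := continuous_iff_continuousAt.2 fun s => (hg' s).continuousAt
  have hgmono : Monotone g :=
    monotone_of_deriv_nonneg (fun s => (hg' s).differentiableAt)
      (fun s => by rw [(hg' s).deriv]; exact hbnn s)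
  -- step: b s ≤ c + K * (s * g s) on Icc 0 t
  have hstep : ∀ s ∈ Set.Icc (0:ℝ) t, b s ≤ c + K * (s * g s) := by
    intro s hs
    refine (hkey s hs).trans (add_le_add_right (mul_le_mul_of_nonneg_left ?_ hK) c)
    calc (∫ w in (0:ℝ)..s, g w) ≤ ∫ w in (0:ℝ)..s, g s := by
          refine integral_mono_on hs.1 (hgc.intervalIntegrable 0 s)
            (intervalIntegrable_const) (fun w hw => hgmono hw.2)
      _ = s * g s := by simp
  -- the weighted function h
  have hq : ∀ s : ℝ, HasDerivAt (fun u : ℝ => -(K * u^2/2)) (-(K*s)) s := by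
    intro s
    have h1 : HasDerivAt (fun u : ℝ => u^2) (2*s) s := by simpa using hasDerivAt_pow 2 s
    have h2 := ((h1.const_mul K).div_const 2).fun_neg
    exact h2.congr_deriv (by ring)
  set h : ℝ → ℝ := fun u => g u * Real.exp (-(K * u^2/2)) with hhdef
  have hh : ∀ s, HasDerivAt h
      (b s * Real.exp (-(K * s^2/2)) + g s * (Real.exp (-(K * s^2/2)) * (-(K*s)))) s :=
    fun s => (hg' s).mul ((hq s).exp)
  set k : ℝ → ℝ := fun u => c * u - h u with hkdef
  have hk : ∀ s, HasDerivAt k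
      (c - (b s * Real.exp (-(K * s^2/2)) + g s * (Real.exp (-(K * s^2/2)) * (-(K*s))))) s := by
    intro s
    have := ((hasDerivAt_id s).const_mul c).fun_sub (hh s)
    simpa using this
  have hkmono : MonotoneOn k (Set.Icc 0 t) := by
    refine monotoneOn_of_deriv_nonneg (convex_Icc 0 t)
      (Continuous.continuousOn (by continuity))
      (fun u hu => ((hk u).differentiableAt).differentiableWithinAt) ?_
    intro u hu
    rw [interior_Icc] at hu
    rw [(hk u).deriv]
    have hu' : u ∈ Set.Icc (0:ℝ) t := ⟨hu.1.le, hu.2.le⟩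
    have hE0 : 0 < Real.exp (-(K * u^2/2)) := Real.exp_pos _
    have hE1 : Real.exp (-(K * u^2/2)) ≤ 1 := by
      rw [Real.exp_le_one_iff]
      nlinarith [sq_nonneg u]
    have hcomb : b u * Real.exp (-(K * u^2/2)) + g u * (Real.exp (-(K * u^2/2)) * (-(K*u)))
        = (b u - K * (u * g u)) * Real.exp (-(K * u^2/2)) := by ring
    rw [hcomb]
    have h1 : b u - K * (u * g u) ≤ c := by linarith [hstep u hu']
    have : (b u - K * (u * g u)) * Real.exp (-(K * u^2/2)) ≤ c * 1 := by
      calc (b u - K * (u * g u)) * Real.exp (-(K * u^2/2))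
          ≤ c * Real.exp (-(K * u^2/2)) := mul_le_mul_of_nonneg_right h1 hE0.le
        _ ≤ c * 1 := mul_le_mul_of_nonneg_left hE1 hc
    linarith
  intro s hs
  have := hkmono (Set.left_mem_Icc.2 ht) hs hs.1
  have hk0 : k 0 = 0 := by simp [hkdef, hhdef, hgdef]
  rw [hk0] at this
  simp only [hkdef] at this
  have hhs : h s ≤ c * s := by linarith
  have : g s * Real.exp (-(K * s^2/2)) ≤ c * s := hhs
  rw [Real.exp_neg] at this
  have hEpos : 0 < Real.exp (K * s^2/2) := Real.exp_pos _
  calc g s = g s * (Real.exp (K * s^2/2))⁻¹ * Real.exp (K * s^2/2) := by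
        field_simp
    _ ≤ c * s * Real.exp (K * s^2/2) := mul_le_mul_of_nonneg_right this hEpos.le

lemma ftc1' {b : ℝ → ℝ} (hb : Continuous b) (s : ℝ) :
    HasDerivAt (fun u => ∫ r in (0:ℝ)..u, b r) (b s) s :=
  integral_hasDerivAt_right (hb.intervalIntegrable 0 s)
    (hb.stronglyMeasurableAtFilter _ _) hb.continuousAt

-- pointwise: ∫₀^u K w e^{K w²/2} dw = e^{K u²/2} - 1
lemma exp_deriv_aux (K : ℝ) (s : ℝ) :
    HasDerivAt (fun u : ℝ => Real.exp (K * u^2/2)) (K * s * Real.exp (K * s^2/2)) s := by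
  have h1 : HasDerivAt (fun u : ℝ => K * u^2/2) (K * s) s := by
    have : HasDerivAt (fun u : ℝ => u^2) (2*s) s := by simpa using hasDerivAt_pow 2 s
    have h2 := (this.const_mul K).div_const 2
    exact h2.congr_deriv (by ring)
  have := h1.exp
  convert this using 1; ring

lemma exp_integral_aux (K u : ℝ) :
    (∫ w in (0:ℝ)..u, K * w * Real.exp (K * w^2/2)) = Real.exp (K * u^2/2) - 1 := by
  have := integral_eq_sub_of_hasDerivAt (f := fun w : ℝ => Real.exp (K * w^2/2))
    (fun w _ => exp_deriv_aux K w)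
    (Continuous.intervalIntegrable (by continuity) 0 u)
  simpa using this

lemma key_integral (K t : ℝ) :
    K * ∫ s in (0:ℝ)..t, (t - s) * s * Real.exp (K * s^2/2)
      = ∫ u in (0:ℝ)..t, (Real.exp (K * u^2/2) - 1) := by
  have cont1 : Continuous fun s : ℝ => s * Real.exp (K * s^2/2) := by continuity
  have cont2 : Continuous fun s : ℝ => s^2 * Real.exp (K * s^2/2) := by continuity
  set A : ℝ → ℝ := fun u => ∫ s in (0:ℝ)..u, s * Real.exp (K * s^2/2) with hAdef
  set B : ℝ → ℝ := fun u => ∫ s in (0:ℝ)..u, s^2 * Real.exp (K * s^2/2) with hBdef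
  have hA' : ∀ u, HasDerivAt A (u * Real.exp (K * u^2/2)) u := ftc1' cont1
  have hB' : ∀ u, HasDerivAt B (u^2 * Real.exp (K * u^2/2)) u := ftc1' cont2
  have hAc : Continuous A := continuous_iff_continuousAt.2 fun s => (hA' s).continuousAt
  -- split the integral
  have hsplit : (∫ s in (0:ℝ)..t, (t - s) * s * Real.exp (K * s^2/2)) = t * A t - B t := by
    have h1 : (∫ s in (0:ℝ)..t, (t - s) * s * Real.exp (K * s^2/2))
        = ∫ s in (0:ℝ)..t, (t * (s * Real.exp (K * s^2/2)) - s^2 * Real.exp (K * s^2/2)) := by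
      apply integral_congr; intro s _; ring
    rw [h1, integral_sub ((continuous_const.fun_mul cont1).intervalIntegrable 0 t)
      (cont2.intervalIntegrable 0 t), intervalIntegral.integral_const_mul]
  -- t * A t - B t = ∫₀^t A
  have hf' : ∀ u : ℝ, HasDerivAt (fun u => u * A u - B u) (A u) u := by
    intro u
    have := ((hasDerivAt_id u).fun_mul (hA' u)).fun_sub (hB' u)
    exact this.congr_deriv (by simp only [id_eq]; ring)
  have h2 : (∫ u in (0:ℝ)..t, A u) = t * A t - B t := by
    have := integral_eq_sub_of_hasDerivAt (f := fun u : ℝ => u * A u - B u)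
      (fun u _ => hf' u) (hAc.intervalIntegrable 0 t)
    simpa [hAdef, hBdef] using this
  rw [hsplit, ← h2, ← intervalIntegral.integral_const_mul]
  apply integral_congr
  intro u _
  show K * A u = Real.exp (K * u^2/2) - 1
  rw [← exp_integral_aux K u]
  simp only [hAdef]
  rw [← intervalIntegral.integral_const_mul]
  apply integral_congr
  intro w _; ring

lemma cont_exp_aux (K : ℝ) : Continuous fun s : ℝ => Real.exp (K * s^2/2) := by
  continuity

end aux

set_option maxHeartbeats 1000000 in
/-- Lower bound on the velocity-separation of backward characteristics:
`|X(-t;x,v') - X(-t;x,v)| ≥ |v - v'| (t - L ∫₀ᵗ (t-s) s e^{L s²/2} ds)` for `t ≥ 0`. -/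
theorem characteristics_separation_lower (d : ℕ) (hd : 1 ≤ d)
    (F : EuclideanSpace ℝ (Fin d) → EuclideanSpace ℝ (Fin d)) (L : ℝ≥0)
    (hF : LipschitzWith L F)
    (X V : ℝ → EuclideanSpace ℝ (Fin d) → EuclideanSpace ℝ (Fin d) → EuclideanSpace ℝ (Fin d))
    (hX0 : ∀ x v, X 0 x v = x) (hV0 : ∀ x v, V 0 x v = v)
    (hX' : ∀ t x v, HasDerivAt (fun s => X s x v) (V t x v) t)
    (hV' : ∀ t x v, HasDerivAt (fun s => V s x v) (F (X t x v)) t) :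
    ∀ (x v v' : EuclideanSpace ℝ (Fin d)) (t : ℝ), 0 ≤ t →
      ‖v - v'‖ * (t - (L : ℝ) * ∫ s in (0:ℝ)..t, (t - s) * s * Real.exp ((L : ℝ) * s ^ 2 / 2))
        ≤ ‖X (-t) x v' - X (-t) x v‖ := by
  intro x v v' t ht
  -- derivatives of backward flow
  have hXd : ∀ (v0 : EuclideanSpace ℝ (Fin d)) (s : ℝ),
      HasDerivAt (fun r => X (-r) x v0) (-(V (-s) x v0)) s := by
    intro v0 s
    have h := (hX' (-s) x v0).scomp s (hasDerivAt_neg s)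
    simpa [Function.comp_def] using h
  have hVd : ∀ (v0 : EuclideanSpace ℝ (Fin d)) (s : ℝ),
      HasDerivAt (fun r => V (-r) x v0) (-(F (X (-s) x v0))) s := by
    intro v0 s
    have h := (hV' (-s) x v0).scomp s (hasDerivAt_neg s)
    simpa [Function.comp_def] using h
  have hc0 : (0:ℝ) ≤ ‖v' - v‖ := norm_nonneg _
  set c := ‖v' - v‖ with hcdef
  set W : ℝ → EuclideanSpace ℝ (Fin d) := fun s => X (-s) x v' - X (-s) x v with hWdef
  set U : ℝ → EuclideanSpace ℝ (Fin d) := fun s => V (-s) x v' - V (-s) x v with hUdef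
  set R : ℝ → EuclideanSpace ℝ (Fin d) := fun s => F (X (-s) x v') - F (X (-s) x v) with hRdef
  have hW' : ∀ s, HasDerivAt W (-(U s)) s := by
    intro s
    have h := (hXd v' s).fun_sub (hXd v s)
    exact h.congr_deriv (by simp [hUdef]; abel)
  have hU' : ∀ s, HasDerivAt U (-(R s)) s := by
    intro s
    have h := (hVd v' s).fun_sub (hVd v s)
    exact h.congr_deriv (by simp [hRdef]; abel)
  have hWc : Continuous W := continuous_iff_continuousAt.2 fun s => (hW' s).continuousAt
  have hUc : Continuous U := continuous_iff_continuousAt.2 fun s => (hU' s).continuousAt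
  have hXc : ∀ v0, Continuous fun s : ℝ => X (-s) x v0 := fun v0 =>
    continuous_iff_continuousAt.2 fun s => (hXd v0 s).continuousAt
  have hRc : Continuous R := (hF.continuous.comp (hXc v')).sub (hF.continuous.comp (hXc v))
  have hRW : ∀ s, ‖R s‖ ≤ (L:ℝ) * ‖W s‖ := by
    intro s
    have h := hF.dist_le_mul (X (-s) x v') (X (-s) x v)
    simpa [dist_eq_norm, hRdef, hWdef] using h
  have hW0 : W 0 = 0 := by simp [hWdef, hX0]
  have hU0 : U 0 = v' - v := by simp [hUdef, hV0]
  -- FTC identities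
  have hWint : ∀ s, W s = ∫ r in (0:ℝ)..s, -(U r) := by
    intro s
    have h := integral_eq_sub_of_hasDerivAt (f := W) (f' := fun r => -(U r))
      (fun r _ => hW' r) ((hUc.neg).intervalIntegrable 0 s)
    rw [h, hW0, sub_zero]
  have hUint : ∀ s, U s - (v' - v) = ∫ r in (0:ℝ)..s, -(R r) := by
    intro s
    have h := integral_eq_sub_of_hasDerivAt (f := U) (f' := fun r => -(R r))
      (fun r _ => hU' r) ((hRc.neg).intervalIntegrable 0 s)
    rw [h, hU0]
  -- norm bounds
  have hWnorm : ∀ s, 0 ≤ s → ‖W s‖ ≤ ∫ r in (0:ℝ)..s, ‖U r‖ := by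
    intro s hs
    rw [hWint s]
    refine (intervalIntegral.norm_integral_le_integral_norm hs).trans_eq ?_
    simp only [norm_neg]
  -- Gronwall
  set b : ℝ → ℝ := fun s => ‖U s‖ with hbdef
  have hbc : Continuous b := hUc.norm
  have hgc : Continuous fun r : ℝ => ∫ w in (0:ℝ)..r, b w :=
    continuous_iff_continuousAt.2 fun s => (ftc1_aux hbc s).continuousAt
  have hkey : ∀ s ∈ Set.Icc (0:ℝ) t,
      b s ≤ c + (L:ℝ) * ∫ w in (0:ℝ)..s, ∫ r in (0:ℝ)..w, b r := by
    intro s hs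
    have h2 : U s = (v' - v) + ∫ r in (0:ℝ)..s, -(R r) := by
      rw [← hUint s]; abel
    have h1 : b s ≤ c + ∫ r in (0:ℝ)..s, ‖R r‖ := by
      calc b s ≤ ‖v' - v‖ + ‖∫ r in (0:ℝ)..s, -(R r)‖ := by
            rw [hbdef]; simp only; rw [h2]; exact norm_add_le _ _
        _ ≤ c + ∫ r in (0:ℝ)..s, ‖R r‖ := by
            refine add_le_add_right ?_ c
            refine (intervalIntegral.norm_integral_le_integral_norm hs.1).trans_eq ?_
            simp only [norm_neg]
    refine h1.trans (add_le_add_right ?_ c)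
    have h3 : (∫ r in (0:ℝ)..s, ‖R r‖)
        ≤ ∫ r in (0:ℝ)..s, (L:ℝ) * ∫ w in (0:ℝ)..r, b w := by
      refine integral_mono_on hs.1 (hRc.norm.intervalIntegrable 0 s)
        ((continuous_const.mul hgc).intervalIntegrable 0 s) ?_
      intro r hr
      exact (hRW r).trans (mul_le_mul_of_nonneg_left (hWnorm r hr.1) L.coe_nonneg)
    refine h3.trans_eq ?_
    rw [intervalIntegral.integral_const_mul]
  have hgron := gronwall_quad c (L:ℝ) t hc0 L.coe_nonneg ht b hbc
    (fun s => norm_nonneg _) hkey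
  have hWbound : ∀ s ∈ Set.Icc (0:ℝ) t, ‖W s‖ ≤ c * s * Real.exp ((L:ℝ) * s^2 / 2) := by
    intro s hs
    exact (hWnorm s hs.1).trans (hgron s hs)
  -- bound on U u - (v' - v)
  have hUbound : ∀ u ∈ Set.Icc (0:ℝ) t,
      ‖U u - (v' - v)‖ ≤ c * (Real.exp ((L:ℝ) * u^2 / 2) - 1) := by
    intro u hu
    rw [hUint u]
    refine (intervalIntegral.norm_integral_le_integral_norm hu.1).trans ?_
    have h4 : (∫ r in (0:ℝ)..u, ‖-(R r)‖)
        ≤ ∫ r in (0:ℝ)..u, (L:ℝ) * (c * r * Real.exp ((L:ℝ) * r^2/2)) := by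
      refine integral_mono_on hu.1 ((hRc.neg).norm.intervalIntegrable 0 u)
        (Continuous.intervalIntegrable (continuous_const.mul
          ((continuous_const.mul continuous_id).mul (cont_exp_aux _))) 0 u) ?_
      intro r hr
      rw [norm_neg]
      refine (hRW r).trans (mul_le_mul_of_nonneg_left ?_ L.coe_nonneg)
      exact hWbound r ⟨hr.1, hr.2.trans hu.2⟩
    refine h4.trans_eq ?_
    have h5 : (∫ r in (0:ℝ)..u, (L:ℝ) * (c * r * Real.exp ((L:ℝ) * r^2/2)))
        = c * ∫ r in (0:ℝ)..u, (L:ℝ) * r * Real.exp ((L:ℝ) * r^2/2) := by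
      rw [← intervalIntegral.integral_const_mul]
      apply integral_congr
      intro w _; ring
    rw [h5, exp_integral_aux]
  -- final assembly
  have hsplitU : (∫ r in (0:ℝ)..t, U r)
      = t • (v' - v) + ∫ r in (0:ℝ)..t, (U r - (v' - v)) := by
    rw [integral_sub (hUc.intervalIntegrable 0 t) intervalIntegrable_const,
      intervalIntegral.integral_const, sub_zero]
    abel
  have hnormW : ‖W t‖ = ‖∫ r in (0:ℝ)..t, U r‖ := by
    rw [hWint t, intervalIntegral.integral_neg, norm_neg]
  have hfin : ‖∫ r in (0:ℝ)..t, (U r - (v' - v))‖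
      ≤ c * ((L:ℝ) * ∫ s in (0:ℝ)..t, (t - s) * s * Real.exp ((L:ℝ) * s ^ 2 / 2)) := by
    refine (intervalIntegral.norm_integral_le_integral_norm ht).trans ?_
    have h5 : (∫ r in (0:ℝ)..t, ‖U r - (v' - v)‖)
        ≤ ∫ u in (0:ℝ)..t, c * (Real.exp ((L:ℝ) * u^2 / 2) - 1) :=
      integral_mono_on ht ((hUc.sub continuous_const).norm.intervalIntegrable 0 t)
        (Continuous.intervalIntegrable (continuous_const.mul
          ((cont_exp_aux _).sub continuous_const)) 0 t) hUbound
    rw [intervalIntegral.integral_const_mul, ← key_integral (L:ℝ) t] at h5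
    convert h5 using 4
  have hng : ‖t • (v' - v)‖ = t * c := by
    rw [norm_smul, Real.norm_eq_abs, abs_of_nonneg ht]
  have htri : ‖t • (v' - v)‖ - ‖∫ r in (0:ℝ)..t, (U r - (v' - v))‖
      ≤ ‖∫ r in (0:ℝ)..t, U r‖ := by
    rw [hsplitU]
    have := norm_add_le (t • (v' - v) + ∫ r in (0:ℝ)..t, (U r - (v' - v)))
      (-(∫ r in (0:ℝ)..t, (U r - (v' - v))))
    simp only [add_neg_cancel_right, norm_neg] at this
    linarith
  have hfinal : ‖v - v'‖ * (t - (L:ℝ) * ∫ s in (0:ℝ)..t, (t - s) * s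
      * Real.exp ((L:ℝ) * s ^ 2 / 2)) ≤ ‖W t‖ := by
    rw [hnormW, norm_sub_rev]
    have : c * (t - (L:ℝ) * ∫ s in (0:ℝ)..t, (t - s) * s * Real.exp ((L:ℝ) * s ^ 2 / 2))
        = t * c - c * ((L:ℝ) * ∫ s in (0:ℝ)..t, (t - s) * s * Real.exp ((L:ℝ) * s ^ 2 / 2)) := by
      ring
    rw [show ‖v' - v‖ = c from rfl, this, ← hng]
    linarith [hfin, htri]
  exact hfinal
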